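/- For T = E M_u bounded on L²(Σ), the point spectrum of T away from 0 is σ_p(T) \ {0} = {λ ∈ ℂ \ {0} : μ({x : E(u)(x) = λ}) > 0}. -/

import Mathlib

open MeasureTheory ComplexConjugate

section Aux

variable {X : Type*} {m m0 : MeasurableSpace X} {μ : Measure X}

private lemma condexp_ofReal (hm : m ≤ m0) [SigmaFinite (μ.trim hm)] {v : X → ℝ}
    (hv : Integrable v μ) :
    μ[fun x => ((v x : ℝ) : ℂ)|m] =ᵐ[μ] fun x => (((μ[v|m]) x : ℝ) : ℂ) := by
  refine (ae_eq_condExp_of_forall_setIntegral_eq hm hv.ofReal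
    (fun s _ _ => integrable_condExp.ofReal.integrableOn) (fun s hs hμs => ?_)
    ((Complex.continuous_ofReal.comp_stronglyMeasurable
      stronglyMeasurable_condExp).aestronglyMeasurable)).symm
  rw [integral_complex_ofReal, integral_complex_ofReal, setIntegral_condExp hm hv hs]

private lemma condexp_re (hm : m ≤ m0) [SigmaFinite (μ.trim hm)] {u : X → ℂ}
    (hu : Integrable u μ) :
    μ[fun x => (u x).re|m] =ᵐ[μ] fun x => ((μ[u|m]) x).re := by
  have hre : Integrable (fun x => (u x).re) μ := by simpa using hu.re
  have hcre : Integrable (fun x => ((μ[u|m]) x).re) μ := by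
    simpa using (integrable_condExp (f := u) (m := m)).re
  refine (ae_eq_condExp_of_forall_setIntegral_eq hm hre
    (fun s _ _ => hcre.integrableOn) (fun s hs hμs => ?_)
    ((Complex.continuous_re.comp_stronglyMeasurable
      stronglyMeasurable_condExp).aestronglyMeasurable)).symm
  have h1 := integral_re (f := fun x => u x) (μ := μ.restrict s) hu.integrableOn
  have h2 := integral_re (f := fun x => (μ[u|m]) x) (μ := μ.restrict s)
    integrable_condExp.integrableOn
  simp only [RCLike.re_to_complex] at h1 h2
  rw [h1, h2, setIntegral_condExp hm hu hs]

private lemma condexp_im (hm : m ≤ m0) [SigmaFinite (μ.trim hm)] {u : X → ℂ}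
    (hu : Integrable u μ) :
    μ[fun x => (u x).im|m] =ᵐ[μ] fun x => ((μ[u|m]) x).im := by
  have him : Integrable (fun x => (u x).im) μ := by simpa using hu.im
  have hcim : Integrable (fun x => ((μ[u|m]) x).im) μ := by
    simpa using (integrable_condExp (f := u) (m := m)).im
  refine (ae_eq_condExp_of_forall_setIntegral_eq hm him
    (fun s _ _ => hcim.integrableOn) (fun s hs hμs => ?_)
    ((Complex.continuous_im.comp_stronglyMeasurable
      stronglyMeasurable_condExp).aestronglyMeasurable)).symm
  have h1 := integral_im (f := fun x => u x) (μ := μ.restrict s) hu.integrableOn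
  have h2 := integral_im (f := fun x => (μ[u|m]) x) (μ := μ.restrict s)
    integrable_condExp.integrableOn
  simp only [RCLike.im_to_complex] at h1 h2
  rw [h1, h2, setIntegral_condExp hm hu hs]

/-- Complex pull-out property of the conditional expectation. -/
private lemma condexp_mul_stronglyMeasurable (hm : m ≤ m0) [SigmaFinite (μ.trim hm)]
    {g u : X → ℂ} (hg : StronglyMeasurable[m] g)
    (hu : Integrable u μ) (hgu : Integrable (fun x => g x * u x) μ) :
    μ[fun x => g x * u x|m] =ᵐ[μ] fun x => g x * (μ[u|m]) x := by
  set a : X → ℝ := fun x => (g x).re with ha_def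
  set b : X → ℝ := fun x => (g x).im with hb_def
  set c : X → ℝ := fun x => (u x).re with hc_def
  set d : X → ℝ := fun x => (u x).im with hd_def
  have ha : StronglyMeasurable[m] a := Complex.continuous_re.comp_stronglyMeasurable hg
  have hb : StronglyMeasurable[m] b := Complex.continuous_im.comp_stronglyMeasurable hg
  have hc : Integrable c μ := by simpa using hu.re
  have hd : Integrable d μ := by simpa using hu.im
  -- integrability of the four real products
  have key : ∀ p q : X → ℝ, StronglyMeasurable[m] p → AEStronglyMeasurable q μ →
      (∀ x, |p x| ≤ ‖g x‖) → (∀ x, |q x| ≤ ‖u x‖) →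
      Integrable (fun x => p x * q x) μ := by
    intro p q hp hq hpg hqu
    refine Integrable.mono hgu.norm (((hp.mono hm).aestronglyMeasurable).mul hq) ?_
    filter_upwards with x
    rw [Real.norm_eq_abs, abs_mul, norm_norm, norm_mul]
    exact mul_le_mul (by simpa using hpg x) (by simpa using hqu x) (abs_nonneg _)
      (norm_nonneg _)
  have hcae : AEStronglyMeasurable c μ :=
    Complex.continuous_re.comp_aestronglyMeasurable hu.aestronglyMeasurable
  have hdae : AEStronglyMeasurable d μ :=
    Complex.continuous_im.comp_aestronglyMeasurable hu.aestronglyMeasurable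
  have hac : Integrable (fun x => a x * c x) μ :=
    key a c ha hcae (fun x => Complex.abs_re_le_norm _) (fun x => Complex.abs_re_le_norm _)
  have hbd : Integrable (fun x => b x * d x) μ :=
    key b d hb hdae (fun x => Complex.abs_im_le_norm _) (fun x => Complex.abs_im_le_norm _)
  have had : Integrable (fun x => a x * d x) μ :=
    key a d ha hdae (fun x => Complex.abs_re_le_norm _) (fun x => Complex.abs_im_le_norm _)
  have hbc : Integrable (fun x => b x * c x) μ :=
    key b c hb hcae (fun x => Complex.abs_im_le_norm _) (fun x => Complex.abs_re_le_norm _)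
  -- real pull-outs
  have pac : μ[fun x => a x * c x|m] =ᵐ[μ] fun x => a x * (μ[c|m]) x :=
    condExp_mul_of_stronglyMeasurable_left ha hac hc
  have pbd : μ[fun x => b x * d x|m] =ᵐ[μ] fun x => b x * (μ[d|m]) x :=
    condExp_mul_of_stronglyMeasurable_left hb hbd hd
  have pad : μ[fun x => a x * d x|m] =ᵐ[μ] fun x => a x * (μ[d|m]) x :=
    condExp_mul_of_stronglyMeasurable_left ha had hd
  have pbc : μ[fun x => b x * c x|m] =ᵐ[μ] fun x => b x * (μ[c|m]) x :=
    condExp_mul_of_stronglyMeasurable_left hb hbc hc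
  -- decomposition of the product
  have hsplit : (fun x => g x * u x) = fun x =>
      ((a x * c x - b x * d x : ℝ) : ℂ) + Complex.I • ((a x * d x + b x * c x : ℝ) : ℂ) := by
    funext x
    simp only [ha_def, hb_def, hc_def, hd_def, smul_eq_mul, Complex.ext_iff, Complex.add_re,
      Complex.add_im, Complex.ofReal_re, Complex.ofReal_im, Complex.mul_re, Complex.mul_im,
      Complex.I_re, Complex.I_im]
    constructor <;> ring
  have h1 : Integrable (fun x => ((a x * c x - b x * d x : ℝ) : ℂ)) μ := (hac.sub hbd).ofReal
  have h2r : Integrable (fun x => a x * d x + b x * c x) μ := had.add hbc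
  have h2 : Integrable (fun x => Complex.I • ((a x * d x + b x * c x : ℝ) : ℂ)) μ :=
    h2r.ofReal.smul Complex.I
  calc μ[fun x => g x * u x|m]
      =ᵐ[μ] μ[fun x => ((a x * c x - b x * d x : ℝ) : ℂ)|m]
        + μ[fun x => Complex.I • ((a x * d x + b x * c x : ℝ) : ℂ)|m] := by
        rw [hsplit]; exact condExp_add h1 h2 m
    _ =ᵐ[μ] μ[fun x => ((a x * c x - b x * d x : ℝ) : ℂ)|m]
        + Complex.I • μ[fun x => ((a x * d x + b x * c x : ℝ) : ℂ)|m] :=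
        Filter.EventuallyEq.add Filter.EventuallyEq.rfl (condExp_smul Complex.I _ m)
    _ =ᵐ[μ] (fun x => (((μ[fun y => a y * c y - b y * d y|m]) x : ℝ) : ℂ))
        + Complex.I • (fun x => (((μ[fun y => a y * d y + b y * c y|m]) x : ℝ) : ℂ)) :=
        Filter.EventuallyEq.add (condexp_ofReal hm (hac.sub hbd))
          ((condexp_ofReal hm h2r).const_smul Complex.I)
    _ =ᵐ[μ] fun x => g x * (μ[u|m]) x := by
        have hsub : μ[fun y => a y * c y - b y * d y|m]
            =ᵐ[μ] μ[fun y => a y * c y|m] - μ[fun y => b y * d y|m] := condExp_sub hac hbd m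
        have hadd : μ[fun y => a y * d y + b y * c y|m]
            =ᵐ[μ] μ[fun y => a y * d y|m] + μ[fun y => b y * c y|m] := condExp_add had hbc m
        filter_upwards [hsub, hadd, pac, pbd, pad, pbc, condexp_re hm hu, condexp_im hm hu]
          with x e1 e2 e3 e4 e5 e6 e7 e8
        simp only [Pi.add_apply, Pi.smul_apply, Pi.sub_apply] at e1 e2 ⊢
        rw [e1, e2, e3, e4, e5, e6, e7, e8]
        simp only [ha_def, hb_def, smul_eq_mul, Complex.ext_iff, Complex.add_re, Complex.add_im,
          Complex.ofReal_re, Complex.ofReal_im, Complex.mul_re, Complex.mul_im, Complex.I_re,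
          Complex.I_im, Complex.ofReal_sub, Complex.ofReal_add, Complex.sub_re, Complex.sub_im]
        constructor <;> ring

end Aux

/-- For `T = E M_u` bounded on `L²(Σ)`, the point spectrum of `T` away from `0` is
`{λ ≠ 0 : μ({x : E(u)(x) = λ}) > 0}`. -/
theorem point_spectrum_conditional_mult {X : Type*} {m m0 : MeasurableSpace X} (hm : m ≤ m0)
    {μ : Measure X} [SigmaFinite μ] [SigmaFinite (μ.trim hm)] (u : X → ℂ)
    (hu1 : Integrable u μ)
    (T : Lp ℂ 2 μ →L[ℂ] Lp ℂ 2 μ)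
    (hui : ∀ f : Lp ℂ 2 μ, Integrable (fun x => u x * (f : X → ℂ) x) μ)
    (hT : ∀ f : Lp ℂ 2 μ, T f =ᵐ[μ] μ[fun y => u y * (f : X → ℂ) y|m]) :
    {l : ℂ | l ≠ 0 ∧ ∃ f : Lp ℂ 2 μ, f ≠ 0 ∧ T f = l • f} =
      {l : ℂ | l ≠ 0 ∧ 0 < μ {x | (μ[u|m]) x = l}} := by
  classical
  ext l
  simp only [Set.mem_setOf_eq]
  constructor
  · rintro ⟨hl, f, hf0, hTf⟩
    refine ⟨hl, ?_⟩
    -- the m-measurable representative of f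
    set g : X → ℂ := fun x => l⁻¹ * (μ[fun y => u y * (f : X → ℂ) y|m]) x with hg_def
    have hgm : StronglyMeasurable[m] g := stronglyMeasurable_condExp.const_mul _
    have hTf' : ⇑(T f) =ᵐ[μ] fun x => l * (f : X → ℂ) x := by
      rw [hTf]; filter_upwards [Lp.coeFn_smul l f] with x hx; simpa using hx
    have hfg : (⇑f : X → ℂ) =ᵐ[μ] g := by
      filter_upwards [(hTf' : ⇑(T f) =ᵐ[μ] _).symm.trans (hT f)] with x hx
      rw [hg_def]; dsimp only
      rw [← hx, inv_mul_cancel_left₀ hl]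
    have hgu : Integrable (fun x => g x * u x) μ := by
      refine (hui f).congr ?_
      filter_upwards [hfg] with x hx
      rw [mul_comm, hx]
    have hpull : μ[fun x => g x * u x|m] =ᵐ[μ] fun x => g x * (μ[u|m]) x :=
      condexp_mul_stronglyMeasurable hm hgm hu1 hgu
    have hcongr : μ[fun x => g x * u x|m] =ᵐ[μ] μ[fun y => u y * (f : X → ℂ) y|m] := by
      refine condExp_congr_ae ?_
      filter_upwards [hfg] with x hx
      rw [mul_comm, hx]
    -- so l • g =ᵐ g * E u
    have hkey : ∀ᵐ x ∂μ, l * g x = g x * (μ[u|m]) x := by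
      filter_upwards [hpull, hcongr, (hT f).symm.trans hTf', hfg] with x h1 h2 h3 h4
      rw [← h1, h2, h3, h4]
    by_contra hpos
    push_neg at hpos
    have hnull : μ {x | (μ[u|m]) x = l} = 0 := le_antisymm hpos zero_le
    have hfz : (⇑f : X → ℂ) =ᵐ[μ] 0 := by
      have hne : ∀ᵐ x ∂μ, (μ[u|m]) x ≠ l := by
        rw [ae_iff]; simpa using hnull
      filter_upwards [hkey, hne, hfg] with x h1 h2 h3
      rw [h3]
      by_contra hgx
      exact h2 (mul_left_cancel₀ hgx (by rw [← h1, mul_comm])).symm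
    exact hf0 ((Lp.eq_zero_iff_ae_eq_zero).2 hfz)
  · rintro ⟨hl, hpos⟩
    refine ⟨hl, ?_⟩
    set A : Set X := {x | (μ[u|m]) x = l} with hA_def
    have hAm : MeasurableSet[m] A := by
      have : Measurable[m] (μ[u|m]) := stronglyMeasurable_condExp.measurable
      exact this (measurableSet_singleton l)
    have hpos' : 0 < μ.trim hm A := by rwa [trim_measurableSet_eq hm hAm]
    obtain ⟨B, hBm, hBA, hB0, hBfin⟩ := Measure.exists_subset_measure_lt_top hAm hpos'
    have hBeq : μ B = μ.trim hm B := (trim_measurableSet_eq hm hBm).symm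
    have hμB_ne : μ B ≠ ⊤ := by rw [hBeq]; exact hBfin.ne
    set f : Lp ℂ 2 μ := indicatorConstLp 2 (hm B hBm) hμB_ne (1 : ℂ) with hf_def
    have hfcoe : ⇑f =ᵐ[μ] B.indicator fun _ => (1 : ℂ) := indicatorConstLp_coeFn
    refine ⟨f, ?_, ?_⟩
    · intro h
      have : (B.indicator fun _ => (1 : ℂ)) =ᵐ[μ] 0 :=
        hfcoe.symm.trans ((Lp.eq_zero_iff_ae_eq_zero).1 h)
      have hB0' : μ B = 0 := by
        have := ae_iff.1 this
        simpa [Set.indicator_apply_eq_zero] using this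
      rw [hBeq] at hB0'
      exact absurd hB0' hB0.ne'
    · refine Lp.ext ?_
      have huf : (fun y => u y * (f : X → ℂ) y) =ᵐ[μ] B.indicator u := by
        filter_upwards [hfcoe] with x hx
        rw [hx, Set.indicator_apply, Set.indicator_apply]
        by_cases h : x ∈ B <;> simp [h]
      calc ⇑(T f) =ᵐ[μ] μ[fun y => u y * (f : X → ℂ) y|m] := hT f
        _ =ᵐ[μ] μ[B.indicator u|m] := condExp_congr_ae huf
        _ =ᵐ[μ] B.indicator (μ[u|m]) := condExp_indicator hu1 hBm
        _ =ᵐ[μ] ⇑(l • f) := by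
            filter_upwards [Lp.coeFn_smul l f, hfcoe] with x hx hfx
            rw [hx]; dsimp only [Pi.smul_apply]
            rw [hfx, Set.indicator_apply, Set.indicator_apply]
            by_cases h : x ∈ B
            · simp only [if_pos h, smul_eq_mul, mul_one]
              exact hBA h
            · simp [h]
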